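/- Let Π be a ground logic program over atoms A with rules indexed by a finite type R, and let T(Π) be its transformed program over A ⊎ R. If M' ⊆ A ⊎ R is a stable model of T(Π), then for every rule r of Π, the auxiliary atom dm_r belongs to M' if and only if the body of r is false in M' ∩ A (i.e. body⁺(r) ⊄ M' ∩ A or body⁻(r) ∩ (M' ∩ A) ≠ ∅). -/
import Mathlib


/-- A ground rule: head ← body⁺, not body⁻. -/
structure Rule (A : Type*) where
  head : A
  bodyPos : Finset A
  bodyNeg : Finset A
deriving DecidableEq

/-- The body of rule `r` is true in interpretation `M`:
`body⁺(r) ⊆ M` and `body⁻(r) ∩ M = ∅`. -/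
def BodyTrue {A : Type*} (M : Set A) (r : Rule A) : Prop :=
  ↑r.bodyPos ⊆ M ∧ ∀ a ∈ r.bodyNeg, a ∉ M

/-- `M` is a model of the program `P` (a family of rules indexed by `R`). -/
def IsModel {A R : Type*} (P : R → Rule A) (M : Set A) : Prop :=
  ∀ r, BodyTrue M (P r) → (P r).head ∈ M

/-- `M` is a supported model of `P`: a model in which every true atom
is the head of some rule of `P` whose body is true in `M`. -/
def IsSupported {A R : Type*} (P : R → Rule A) (M : Set A) : Prop :=
  IsModel P M ∧ ∀ a ∈ M, ∃ r, (P r).head = a ∧ ↑(P r).bodyPos ⊆ M ∧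
    ∀ b ∈ (P r).bodyNeg, b ∉ M

/-- `N` is a model of the Gelfond–Lifschitz reduct `P^M`: for every rule of `P`
surviving the reduct (i.e. with `body⁻(r) ∩ M = ∅`), whose negative literals are
removed, if its positive body holds in `N` then so does its head. -/
def ReductModel {A R : Type*} (P : R → Rule A) (M N : Set A) : Prop :=
  ∀ r, (∀ a ∈ (P r).bodyNeg, a ∉ M) → ↑(P r).bodyPos ⊆ N → (P r).head ∈ N

/-- `M` is a stable model of `P`: `M` is the least model of the reduct `P^M`. -/
def IsStable {A R : Type*} (P : R → Rule A) (M : Set A) : Prop :=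
  ReductModel P M M ∧ ∀ N, ReductModel P M N → M ⊆ N

/-- Index type for the rules of the transformed program `T(P)`: one rule
`head(r) ← not dm_r` per rule `r`, one rule `dm_r ← not l` per `l ∈ body⁺(r)`,
and one rule `dm_r ← l` per `l ∈ body⁻(r)`. -/
abbrev TransIdx {A R : Type*} (P : R → Rule A) : Type _ :=
  R ⊕ ((Σ r : R, {l // l ∈ (P r).bodyPos}) ⊕ (Σ r : R, {l // l ∈ (P r).bodyNeg}))

/-- The transformed program `T(P)` over atoms `A ⊕ R`, where `Sum.inr r`
plays the role of the fresh auxiliary atom `dm_r`. -/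
def Transform {A R : Type*} (P : R → Rule A) : TransIdx P → Rule (A ⊕ R)
  | Sum.inl r => ⟨Sum.inl (P r).head, ∅, {Sum.inr r}⟩
  | Sum.inr (Sum.inl ⟨r, l⟩) => ⟨Sum.inr r, ∅, {Sum.inl l.1}⟩
  | Sum.inr (Sum.inr ⟨r, l⟩) => ⟨Sum.inr r, {Sum.inl l.1}, ∅⟩

/-- `Lift P M = M ∪ { dm_r | the body of rule r is false in M }`,
viewing `M ⊆ A` as a subset of `A ⊕ R` via the left injection. -/
def Lift {A R : Type*} (P : R → Rule A) (M : Set A) : Set (A ⊕ R) :=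
  Sum.inl '' M ∪ Sum.inr '' {r | ¬ BodyTrue M (P r)}

/-- If `M'` is a stable model of `T(P)`, then for every rule `r` of `P` the
auxiliary atom `dm_r` belongs to `M'` iff the body of `r` is false in `M' ∩ A`. -/
theorem stable_model_of_transform_dm_iff_body_false
    {A R : Type*} [Fintype R] (P : R → Rule A) (M' : Set (A ⊕ R))
    (h : IsStable (Transform P) M') :
    ∀ r : R, Sum.inr r ∈ M' ↔ ¬ BodyTrue (Sum.inl ⁻¹' M') (P r) := by
  intro r
  obtain ⟨hred, hmin⟩ := h
  constructor
  · intro hr hbt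
    have hN : ReductModel (Transform P) M' (M' \ {Sum.inr r}) := by
      intro i hneg hpos
      match i with
      | Sum.inl s =>
        refine ⟨hred (Sum.inl s) hneg (by simp [Transform]), ?_⟩
        simp [Transform]
      | Sum.inr (Sum.inl ⟨s, l, hl⟩) =>
        refine ⟨hred (Sum.inr (Sum.inl ⟨s, l, hl⟩)) hneg (by simp [Transform]), ?_⟩
        simp only [Transform, Set.mem_singleton_iff, Sum.inr.injEq]
        rintro rfl
        have : Sum.inl l ∉ M' := by
          have := hneg (Sum.inl l)
          simp [Transform] at this
          exact this
        exact this (hbt.1 hl)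
      | Sum.inr (Sum.inr ⟨s, l, hl⟩) =>
        have hlM : Sum.inl l ∈ M' := by
          have := hpos (a := Sum.inl l) (by simp [Transform])
          exact this.1
        refine ⟨hred (Sum.inr (Sum.inr ⟨s, l, hl⟩)) hneg (by
          intro a ha; simp [Transform] at ha; subst ha; exact hlM), ?_⟩
        simp only [Set.mem_singleton_iff, Transform, Sum.inr.injEq]
        rintro rfl
        exact hbt.2 l hl hlM
    have := hmin _ hN hr
    exact this.2 rfl
  · intro hbf
    rw [BodyTrue, not_and_or] at hbf
    rcases hbf with hpos | hneg
    · rw [Set.not_subset] at hpos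
      obtain ⟨l, hl, hlM⟩ := hpos
      exact hred (Sum.inr (Sum.inl ⟨r, l, hl⟩))
        (by intro a ha; simp [Transform] at ha; subst ha; exact hlM)
        (by simp [Transform])
    · push_neg at hneg
      obtain ⟨l, hl, hlM⟩ := hneg
      exact hred (Sum.inr (Sum.inr ⟨r, l, hl⟩)) (by simp [Transform])
        (by intro a ha; simp [Transform] at ha; subst ha; exact hlM)
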